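/- arXiv:1301.7742 — 5 statements merged into one kernel-verified Lean document; each statement's English description precedes it below -/
import Mathlib

section
/- Let T̃ > 0 and M > 0. There exists T > 0, depending only on T̃ and M, with the following property: for every function f analytic on the disk D_{T̃} := {t ∈ ℂ : |t| < T̃} satisfying f(0) = 0, f′(0) = 1, |f(t)| ≤ M for all t ∈ D_{T̃}, and Re f(t) = 0 for every t ∈ D_{T̃} with Re t = 0, one has Re f(t) > 0 for every t ∈ D_T := {t ∈ ℂ : |t| < T} with Re t > 0. -/
open Metric Set Complex

/-- Given `T̃ > 0` and `M > 0`, there is `T > 0`, depending only on `T̃`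
and `M`, such that every analytic `f` on the disk `D_{T̃}` with `f(0) = 0`, `f′(0) = 1`,
`|f| ≤ M`, and mapping the imaginary axis (inside the disk) to the imaginary axis, maps
points of `D_T` with positive real part to points with positive real part. -/
theorem stmt5 (T' M : ℝ) (hT' : 0 < T') (hM : 0 < M) :
    ∃ T > 0, ∀ f : ℂ → ℂ,
      DifferentiableOn ℂ f (Metric.ball (0 : ℂ) T') →
      f 0 = 0 →
      deriv f 0 = 1 →
      (∀ t ∈ Metric.ball (0 : ℂ) T', ‖f t‖ ≤ M) →
      (∀ t ∈ Metric.ball (0 : ℂ) T', t.re = 0 → (f t).re = 0) →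
      ∀ t : ℂ, ‖t‖ < T → 0 < t.re → 0 < (f t).re := by
  set B : ℝ := (M + 1) / T' + 1 with hBdef
  have hBpos : 0 < B := by positivity
  set C : ℝ := (B + 1) / T' with hCdef
  have hCpos : 0 < C := by positivity
  set ρ : ℝ := min T' (1 / (12 * C)) with hρdef
  have hρpos : 0 < ρ := lt_min hT' (by positivity)
  have hρT' : ρ ≤ T' := min_le_left _ _
  have hρC : ρ ≤ 1 / (12 * C) := min_le_right _ _
  refine ⟨ρ / 2, by positivity, ?_⟩
  intro f hdf hf0 hf1 hfM hfim t ht htre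
  -- Step A: quadratic bound ‖f z - z‖ ≤ C * ‖z‖ ^ 2 on ball 0 T'
  have hmaps1 : MapsTo f (ball (0 : ℂ) T') (ball (f 0) (M + 1)) := by
    intro z hz
    rw [hf0, mem_ball, dist_zero_right]
    exact lt_of_le_of_lt (hfM z hz) (by linarith)
  set g : ℂ → ℂ := dslope f 0 with hgdef
  have hgd : DifferentiableOn ℂ g (ball (0 : ℂ) T') :=
    (differentiableOn_dslope (ball_mem_nhds _ hT')).mpr hdf
  have hgb : ∀ z ∈ ball (0 : ℂ) T', ‖g z‖ ≤ (M + 1) / T' := fun z hz =>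
    Complex.norm_dslope_le_div_of_mapsTo_ball hdf (hmaps1.mono_right ball_subset_closedBall) hz
  have hg0 : g 0 = 1 := by rw [hgdef, dslope_same, hf1]
  set g1 : ℂ → ℂ := fun z => g z - 1 with hg1def
  have hg1d : DifferentiableOn ℂ g1 (ball (0 : ℂ) T') := hgd.sub_const 1
  have hg10 : g1 0 = 0 := by simp [hg1def, hg0]
  have hmaps2 : MapsTo g1 (ball (0 : ℂ) T') (ball (g1 0) (B + 1)) := by
    intro z hz
    rw [hg10, mem_ball, dist_zero_right]
    have := hgb z hz
    calc ‖g z - 1‖ ≤ ‖g z‖ + ‖(1 : ℂ)‖ := norm_sub_le _ _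
      _ ≤ (M + 1) / T' + 1 := by rw [norm_one]; linarith
      _ < B + 1 := by rw [hBdef]; linarith
  have hg1b : ∀ z ∈ ball (0 : ℂ) T', ‖g z - 1‖ ≤ C * ‖z‖ := by
    intro z hz
    have := Complex.dist_le_div_mul_dist_of_mapsTo_ball hg1d (hmaps2.mono_right ball_subset_closedBall) hz
    rwa [hg10, dist_zero_right, dist_zero_right, hg1def] at this
  have hfz : ∀ z : ℂ, z ∈ ball (0 : ℂ) T' → f z - z = z * (g z - 1) := by
    intro z hz
    rcases eq_or_ne z 0 with rfl | hz0
    · simp [hf0]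
    · rw [hgdef, dslope_of_ne _ hz0, slope_def_field, hf0]
      field_simp
      ring
  have hquad : ∀ z ∈ ball (0 : ℂ) T', ‖f z - z‖ ≤ C * ‖z‖ ^ 2 := by
    intro z hz
    rw [hfz z hz, norm_mul, pow_two]
    calc ‖z‖ * ‖g z - 1‖ ≤ ‖z‖ * (C * ‖z‖) :=
          mul_le_mul_of_nonneg_left (hg1b z hz) (norm_nonneg z)
      _ = C * (‖z‖ * ‖z‖) := by ring
  -- Step B: derivative bound on ball 0 (ρ/2)
  set φ : ℂ → ℂ := fun z => f z - z with hφdef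
  have hφd : DifferentiableOn ℂ φ (ball (0 : ℂ) T') := hdf.sub differentiable_id.differentiableOn
  have hballsub : ∀ s : ℂ, s ∈ ball (0 : ℂ) (ρ / 2) → ball s (ρ / 2) ⊆ ball (0 : ℂ) T' := by
    intro s hs z hz
    rw [mem_ball, dist_zero_right] at hs ⊢
    rw [mem_ball, dist_eq_norm] at hz
    calc ‖z‖ = ‖(z - s) + s‖ := by ring_nf
      _ ≤ ‖z - s‖ + ‖s‖ := norm_add_le _ _
      _ < ρ / 2 + ρ / 2 := by linarith
      _ ≤ T' := by linarith
  have hderiv : ∀ s ∈ ball (0 : ℂ) (ρ / 2), ‖deriv f s - 1‖ ≤ 1 / 2 := by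
    intro s hs
    have hsub := hballsub s hs
    have hnormz : ∀ z ∈ ball s (ρ / 2), ‖z‖ ≤ ρ := by
      intro z hz
      rw [mem_ball, dist_eq_norm] at hz
      rw [mem_ball, dist_zero_right] at hs
      calc ‖z‖ = ‖(z - s) + s‖ := by ring_nf
        _ ≤ ‖z - s‖ + ‖s‖ := norm_add_le _ _
        _ ≤ ρ := by linarith
    have hmaps3 : MapsTo φ (ball s (ρ / 2)) (ball (φ s) (3 * C * ρ ^ 2)) := by
      intro z hz
      rw [mem_ball, dist_eq_norm]
      have h1 : ‖φ z - φ s‖ ≤ ‖f z - z‖ + ‖f s - s‖ := by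
        have : φ z - φ s = (f z - z) - (f s - s) := by rw [hφdef]
        rw [this]; exact norm_sub_le _ _
      have h2 := hquad z (hsub hz)
      have h3 := hquad s (hsub (mem_ball_self (by positivity)))
      have hz2 : ‖z‖ ^ 2 ≤ ρ ^ 2 := by
        apply pow_le_pow_left₀ (norm_nonneg z) (hnormz z hz)
      have hs2 : ‖s‖ ^ 2 ≤ ρ ^ 2 := by
        apply pow_le_pow_left₀ (norm_nonneg s)
        exact hnormz s (mem_ball_self (by positivity))
      have hCz : C * ‖z‖ ^ 2 ≤ C * ρ ^ 2 := by nlinarith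
      have hCs : C * ‖s‖ ^ 2 ≤ C * ρ ^ 2 := by nlinarith
      have : (0:ℝ) < C * ρ ^ 2 := by positivity
      linarith
    have hb := Complex.norm_deriv_le_div_of_mapsTo_ball (hφd.mono hsub) (hmaps3.mono_right ball_subset_closedBall) (by positivity)
    have hφderiv : deriv φ s = deriv f s - 1 := by
      have hfs : DifferentiableAt ℂ f s :=
        hdf.differentiableAt (isOpen_ball.mem_nhds (hsub (mem_ball_self (by positivity))))
      rw [hφdef]
      rw [deriv_fun_sub (g := fun z : ℂ => z) hfs differentiableAt_id]
      simp
    rw [hφderiv] at hb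
    have heq : 3 * C * ρ ^ 2 / (ρ / 2) = 6 * C * ρ := by
      field_simp; ring
    rw [heq] at hb
    calc ‖deriv f s - 1‖ ≤ 6 * C * ρ := hb
      _ ≤ 6 * C * (1 / (12 * C)) := by nlinarith
      _ = 1 / 2 := by field_simp; ring
  -- Step C: mean value on ball 0 (ρ/2)
  set w : ℂ := (t.im : ℝ) * Complex.I with hwdef
  have hwre : w.re = 0 := by simp [hwdef]
  have hwnorm : ‖w‖ ≤ ‖t‖ := by
    rw [hwdef]
    simp only [norm_mul, Complex.norm_real, Complex.norm_I, mul_one, Real.norm_eq_abs]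
    exact Complex.abs_im_le_norm t
  have htball : t ∈ ball (0 : ℂ) (ρ / 2) := by rwa [mem_ball, dist_zero_right]
  have hwball : w ∈ ball (0 : ℂ) (ρ / 2) := by
    rw [mem_ball, dist_zero_right]; exact lt_of_le_of_lt hwnorm ht
  have hhas : ∀ s ∈ ball (0 : ℂ) (ρ / 2), HasDerivWithinAt φ (deriv f s - 1) (ball (0 : ℂ) (ρ / 2)) s := by
    intro s hs
    have hfs : DifferentiableAt ℂ f s :=
      hdf.differentiableAt (isOpen_ball.mem_nhds ((hballsub s hs) (mem_ball_self (by positivity))))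
    exact ((hfs.hasDerivAt.sub (hasDerivAt_id s)).hasDerivWithinAt)
  have hmv := Convex.norm_image_sub_le_of_norm_hasDerivWithin_le hhas hderiv (convex_ball _ _) hwball htball
  -- compute t - w
  have htw : t - w = (t.re : ℂ) := by
    apply Complex.ext <;> simp [hwdef]
  have htwnorm : ‖t - w‖ = t.re := by
    rw [htw, Complex.norm_real, Real.norm_eq_abs, abs_of_pos htre]
  rw [htwnorm] at hmv
  -- real parts
  have hfw : (f w).re = 0 := by
    apply hfim w _ hwre
    rw [mem_ball, dist_zero_right]
    exact lt_of_lt_of_le (lt_of_le_of_lt hwnorm ht) (by linarith)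
  have hre : |(φ t - φ w).re| ≤ ‖φ t - φ w‖ := Complex.abs_re_le_norm _
  have hrecalc : (φ t - φ w).re = (f t).re - t.re - (f w).re + w.re := by
    simp only [hφdef, Complex.sub_re]
    ring
  rw [hrecalc, hfw, hwre] at hre
  have habs := le_trans hre hmv
  rw [abs_le] at habs
  linarith [habs.1]
end

section
/- There exists δ > 0 such that for every ω, t ∈ ℂ with 0 < |ωt| < δ, every s ∈ [0,1] and every x, y ∈ ℂ^ν, one has |q_ω(s)| ≤ 4 max(|x|, |y|), where q_ω(s) := (sh(ωts) x + sh(ωt(1−s)) y)/sh(ωt). -/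
open Complex

lemma sinh_sub_self_bound {z : ℂ} (hz : ‖z‖ ≤ 1) :
    ‖Complex.sinh z - z‖ ≤ ‖z‖ ^ 3 := by
  have h1 : ‖z‖ ≤ 1 := hz
  have h2 : ‖-z‖ ≤ 1 := by simpa using hz
  have e1 := Complex.exp_bound h1 (n := 3) (by norm_num)
  have e2 := Complex.exp_bound h2 (n := 3) (by norm_num)
  have hs : Complex.sinh z - z =
      ((Complex.exp z - ∑ m ∈ Finset.range 3, z ^ m / m.factorial) -
       (Complex.exp (-z) - ∑ m ∈ Finset.range 3, (-z) ^ m / m.factorial)) / 2 := by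
    have h2s : Complex.sinh z = (Complex.exp z - Complex.exp (-z)) / 2 := by
      have := Complex.two_sinh (x := z)
      linear_combination this / 2
    rw [h2s]
    simp [Finset.sum_range_succ]
    ring
  rw [hs]
  rw [norm_div]
  have habs : ‖-z‖ = ‖z‖ := by simp
  calc ‖(Complex.exp z - ∑ m ∈ Finset.range 3, z ^ m / m.factorial) -
       (Complex.exp (-z) - ∑ m ∈ Finset.range 3, (-z) ^ m / m.factorial)‖ / ‖(2:ℂ)‖
      ≤ (‖z‖ ^ 3 * ((4:ℝ) * ((6:ℝ) * 3)⁻¹) +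
         ‖z‖ ^ 3 * ((4:ℝ) * ((6:ℝ) * 3)⁻¹)) / 2 := by
        have : ‖(2:ℂ)‖ = 2 := by norm_num
        rw [this]
        gcongr
        refine (norm_sub_le _ _).trans ?_
        refine add_le_add (by simpa [Nat.factorial] using e1) ?_
        rw [← habs]
        simpa [Nat.factorial] using e2
    _ ≤ ‖z‖ ^ 3 := by nlinarith [norm_nonneg z, pow_nonneg (norm_nonneg z) 3]

lemma sinh_ratio_bound {z : ℂ} (hz0 : 0 < ‖z‖) (hz : ‖z‖ ≤ 1/2) {s : ℝ}
    (hs0 : 0 ≤ s) (hs1 : s ≤ 1) :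
    ‖Complex.sinh (z * (s:ℂ)) / Complex.sinh z‖ ≤ 2 := by
  have hz1 : ‖z‖ ≤ 1 := hz.trans (by norm_num)
  have hlow : (3/4 : ℝ) * ‖z‖ ≤ ‖Complex.sinh z‖ := by
    have h := sinh_sub_self_bound hz1
    have h2 : ‖z‖ - ‖Complex.sinh z‖ ≤ ‖z‖ ^ 3 := by
      have := norm_sub_norm_le (Complex.sinh z - z) (Complex.sinh z)
      simp only [sub_sub_cancel_left, norm_neg] at this
      nlinarith [norm_sub_rev (Complex.sinh z) z, (norm_sub_norm_le z (Complex.sinh z)).trans ((norm_sub_rev z (Complex.sinh z)) ▸ h)]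
    nlinarith [sq_nonneg ‖z‖]
  have hzs : ‖z * (s:ℂ)‖ = ‖z‖ * s := by
    rw [norm_mul, Complex.norm_real, Real.norm_of_nonneg hs0]
  have hzs1 : ‖z * (s:ℂ)‖ ≤ 1 := by
    rw [hzs]; nlinarith
  have hup : ‖Complex.sinh (z * (s:ℂ))‖ ≤ (5/4 : ℝ) * ‖z‖ := by
    have h := sinh_sub_self_bound hzs1
    have h2 : ‖Complex.sinh (z * (s:ℂ))‖ ≤ ‖z * (s:ℂ)‖ + ‖z * (s:ℂ)‖ ^ 3 := by
      have := norm_le_norm_add_norm_sub' (Complex.sinh (z * (s:ℂ))) (z * (s:ℂ))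
      nlinarith [norm_sub_rev (Complex.sinh (z * (s:ℂ))) (z * (s:ℂ))]
    rw [hzs] at h2
    have hzs2 : ‖z‖ * s ≤ 1/2 := by nlinarith
    nlinarith [mul_nonneg (norm_nonneg z) hs0, sq_nonneg (‖z‖ * s)]
  rw [norm_div]
  rw [div_le_iff₀ (lt_of_lt_of_le (by linarith) hlow)]
  nlinarith

/-- There exists `δ > 0` such that for all `ω, t ∈ ℂ` with
`0 < |ωt| < δ`, all `s ∈ [0,1]` and all `x, y ∈ ℂ^ν`, the path
`q_ω(s) = (sh(ωts) x + sh(ωt(1−s)) y)/sh(ωt)` satisfies `|q_ω(s)| ≤ 4 max(|x|,|y|)`. -/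
theorem stmt8 (ν : ℕ) :
    ∃ δ > (0 : ℝ), ∀ ω t : ℂ, 0 < ‖ω * t‖ → ‖ω * t‖ < δ →
      ∀ s ∈ Set.Icc (0 : ℝ) 1, ∀ x y : EuclideanSpace ℂ (Fin ν),
        ‖(Complex.sinh (ω * t * (s : ℂ)) / Complex.sinh (ω * t)) • x
            + (Complex.sinh (ω * t * (1 - (s : ℂ))) / Complex.sinh (ω * t)) • y‖
          ≤ 4 * max ‖x‖ ‖y‖ := by
  refine ⟨1/2, by norm_num, ?_⟩
  intro ω t h0 hlt s hs x y
  obtain ⟨hs0, hs1⟩ := hs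
  have hz : ‖ω * t‖ ≤ 1/2 := hlt.le
  have h1 : ‖Complex.sinh (ω * t * (s:ℂ)) / Complex.sinh (ω * t)‖ ≤ 2 :=
    sinh_ratio_bound h0 hz hs0 hs1
  have h2 : ‖Complex.sinh (ω * t * (1 - (s:ℂ))) / Complex.sinh (ω * t)‖ ≤ 2 := by
    have : (1 - (s:ℂ)) = ((1 - s : ℝ) : ℂ) := by push_cast; ring
    rw [this]
    exact sinh_ratio_bound h0 hz (by linarith) (by linarith)
  calc ‖(Complex.sinh (ω * t * (s:ℂ)) / Complex.sinh (ω * t)) • x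
        + (Complex.sinh (ω * t * (1 - (s:ℂ))) / Complex.sinh (ω * t)) • y‖
      ≤ ‖(Complex.sinh (ω * t * (s:ℂ)) / Complex.sinh (ω * t)) • x‖
        + ‖(Complex.sinh (ω * t * (1 - (s:ℂ))) / Complex.sinh (ω * t)) • y‖ := norm_add_le _ _
    _ ≤ 2 * ‖x‖ + 2 * ‖y‖ := by
        rw [norm_smul, norm_smul]
        gcongr
    _ ≤ 4 * max ‖x‖ ‖y‖ := by
        have := le_max_left ‖x‖ ‖y‖
        have := le_max_right ‖x‖ ‖y‖
        linarith
end

section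
/- Let ν ≥ 1, ω > 0 and y ∈ ℝ^ν. Define u_ω : (0,∞) × ℝ^ν → ℝ by u_ω(t,x) := (4π sh(ωt)/ω)^{−ν/2} exp( −(ω/(4 sh(ωt))) ( ch(ωt)(|x|² + |y|²) − 2 x·y ) ). Then u_ω satisfies the harmonic-oscillator heat equation ∂_t u_ω(t,x) = Δ_x u_ω(t,x) − (ω²/4) |x|² u_ω(t,x) for every t > 0 and x ∈ ℝ^ν (Mehler's formula). -/
open Finset Real

lemma quadexp_hasDerivAt (K a b c : ℝ) (z : ℝ) :
    HasDerivAt (fun z => K * Real.exp (a*z^2 + b*z + c))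
      ((2*a*z + b) * (K * Real.exp (a*z^2 + b*z + c))) z := by
  have h : HasDerivAt (fun z : ℝ => a*z^2 + b*z + c) (2*a*z + b) z := by
    have := (((hasDerivAt_pow 2 z).const_mul a).add ((hasDerivAt_id z).const_mul b)).add_const c
    exact this.congr_deriv (by norm_num; ring)
  have := (h.exp).const_mul K
  exact this.congr_deriv (by ring)

lemma iter2 (K a b c w : ℝ) :
    iteratedDeriv 2 (fun z => K * Real.exp (a*z^2 + b*z + c)) w
      = (2*a + (2*a*w + b)^2) * (K * Real.exp (a*w^2 + b*w + c)) := by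
  rw [show (2:ℕ) = 1 + 1 from rfl, iteratedDeriv_succ, iteratedDeriv_one]
  have hd : deriv (fun z => K * Real.exp (a*z^2 + b*z + c))
      = fun z => (2*a*z + b) * (K * Real.exp (a*z^2 + b*z + c)) :=
    funext fun z => (quadexp_hasDerivAt K a b c z).deriv
  rw [hd]
  have h2 : HasDerivAt (fun z => (2*a*z + b) * (K * Real.exp (a*z^2 + b*z + c)))
      ((2*a) * (K * Real.exp (a*w^2 + b*w + c)) +
        (2*a*w + b) * ((2*a*w + b) * (K * Real.exp (a*w^2 + b*w + c)))) w := by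
    exact (((hasDerivAt_id w).const_mul (2*a)).add_const b).mul (quadexp_hasDerivAt K a b c w)
      |>.congr_deriv (by simp only [id_eq]; ring)
  rw [h2.deriv]
  ring


/-- **Mehler's formula.** For `ω > 0`, `y ∈ ℝ^ν`, the function
`u_ω(t,x) = (4π sh(ωt)/ω)^{−ν/2} exp(−(ω/(4 sh(ωt)))(ch(ωt)(|x|²+|y|²) − 2x·y))`
satisfies `∂_t u_ω = Δ_x u_ω − (ω²/4)|x|² u_ω` for `t > 0`, `x ∈ ℝ^ν`. -/
theorem stmt9 (ν : ℕ) (hν : 1 ≤ ν) (ω : ℝ) (hω : 0 < ω) (y : Fin ν → ℝ)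
    (u : ℝ → (Fin ν → ℝ) → ℝ)
    (hu : ∀ t : ℝ, ∀ x : Fin ν → ℝ,
      u t x = (4 * Real.pi * Real.sinh (ω * t) / ω) ^ (-(ν : ℝ) / 2) *
        Real.exp (-(ω / (4 * Real.sinh (ω * t))) *
          (Real.cosh (ω * t) * ((∑ i, x i ^ 2) + ∑ i, y i ^ 2) - 2 * ∑ i, x i * y i))) :
    ∀ t : ℝ, 0 < t → ∀ x : Fin ν → ℝ,
      HasDerivAt (fun t' => u t' x)
        ((∑ i, iteratedDeriv 2 (fun z : ℝ => u t (Function.update x i z)) (x i))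
          - ω ^ 2 / 4 * (∑ i, x i ^ 2) * u t x) t := by
  intro t ht x
  have hω0 : ω ≠ 0 := ne_of_gt hω
  have hs : 0 < Real.sinh (ω * t) := Real.sinh_pos_iff.2 (mul_pos hω ht)
  set s : ℝ := Real.sinh (ω * t) with hs_def
  set c : ℝ := Real.cosh (ω * t) with hc_def
  have hs0 : s ≠ 0 := ne_of_gt hs
  have hc2 : c ^ 2 = 1 + s ^ 2 := by
    have := Real.cosh_sq_sub_sinh_sq (ω * t); rw [hs_def, hc_def]; nlinarith [this]
  set S : ℝ := ∑ i, x i ^ 2 with hS_def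
  set Y : ℝ := ∑ i, y i ^ 2 with hY_def
  set P : ℝ := ∑ i, x i * y i with hP_def
  set p : ℝ := -(ν : ℝ) / 2 with hp_def
  have hfpos : 0 < 4 * π * s / ω := by positivity
  set A : ℝ := (4 * π * s / ω) ^ p with hA_def
  set E : ℝ := -(ω / (4 * s)) * (c * (S + Y) - 2 * P) with hE_def
  set a : ℝ := -(ω / (4 * s)) * c with ha_def
  -- spatial terms
  have hterm : ∀ i, iteratedDeriv 2 (fun z : ℝ => u t (Function.update x i z)) (x i)
      = (2*a + (2*a*(x i) + (ω/(2*s)) * y i)^2) * (A * Real.exp E) := by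
    intro i
    have keyS : ∀ z : ℝ, ∑ j, (Function.update x i z j) ^ 2 = S - x i ^ 2 + z ^ 2 := by
      intro z
      rw [← Finset.sum_erase_add _ _ (Finset.mem_univ i), Function.update_self]
      rw [Finset.sum_congr rfl (fun j hj => by
        rw [Function.update_of_ne (Finset.ne_of_mem_erase hj)])]
      rw [hS_def, ← Finset.sum_erase_add _ (fun j => x j ^ 2) (Finset.mem_univ i)]
      ring
    have keyP : ∀ z : ℝ, ∑ j, (Function.update x i z j) * y j = P - x i * y i + z * y i := by
      intro z
      rw [← Finset.sum_erase_add _ _ (Finset.mem_univ i), Function.update_self]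
      rw [Finset.sum_congr rfl (fun j hj => by
        rw [Function.update_of_ne (Finset.ne_of_mem_erase hj)])]
      rw [hP_def, ← Finset.sum_erase_add _ (fun j => x j * y j) (Finset.mem_univ i)]
      ring
    have hfun : (fun z : ℝ => u t (Function.update x i z))
        = fun z : ℝ => A * Real.exp (a * z^2 + (ω/(2*s)) * y i * z +
            (-(ω / (4 * s)) * (c * (S - x i ^ 2 + Y) - 2 * (P - x i * y i)))) := by
      funext z
      rw [hu, keyS, keyP]
      rw [hA_def, hp_def, hs_def]
      congr 1
      rw [← hs_def, ← hc_def, ha_def]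
      ring
    rw [hfun, iter2]
    congr 2
    rw [hE_def, ha_def]; ring
  rw [Finset.sum_congr rfl (fun i _ => hterm i), hu t x]
  simp only [← hs_def, ← hc_def, ← hS_def, ← hY_def, ← hP_def, ← hp_def, ← hA_def, ← hE_def]
  -- the scalar sum
  have hscal : ∑ i, (2*a + (2*a*(x i) + (ω/(2*s)) * y i)^2) * (A * Real.exp E)
      = ((ν : ℝ) * (2*a) + (4*a^2*S + (2*a*(ω/s))*P + (ω/(2*s))^2*Y)) * (A * Real.exp E) := by
    rw [← Finset.sum_mul]
    congr 1
    have h1 : ∀ i, 2*a + (2*a*(x i) + (ω/(2*s)) * y i)^2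
        = 2*a + (4*a^2*(x i)^2 + (2*a*(ω/s))*(x i * y i) + (ω/(2*s))^2*(y i)^2) := by
      intro i; field_simp; ring
    rw [Finset.sum_congr rfl (fun i _ => h1 i)]
    rw [Finset.sum_add_distrib, Finset.sum_add_distrib, Finset.sum_add_distrib,
      Finset.sum_const, Finset.card_univ, Fintype.card_fin, ← Finset.mul_sum,
      ← Finset.mul_sum, ← Finset.mul_sum, ← hS_def, ← hP_def, ← hY_def]
    ring
  rw [hscal]
  -- time derivative
  have h1 : HasDerivAt (fun t' => Real.sinh (ω * t')) (ω * c) t := by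
    have := (Real.hasDerivAt_sinh (ω * t)).comp t ((hasDerivAt_id t).const_mul ω)
    simpa [hc_def, mul_comm, Function.comp_def] using this
  have h2 : HasDerivAt (fun t' => 4 * π * Real.sinh (ω * t') / ω)
      (4 * π * (ω * c) / ω) t := (h1.const_mul (4*π)).div_const ω
  have h3 : HasDerivAt (fun t' => (4 * π * Real.sinh (ω * t') / ω) ^ p)
      (p * (4 * π * s / ω) ^ (p - 1) * (4 * π * (ω * c) / ω)) t := by
    have := h2.rpow_const (p := p) (Or.inl (ne_of_gt hfpos))
    rw [hs_def]
    exact this.congr_deriv (by rw [← hs_def]; ring)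
  have hcosh : HasDerivAt (fun t' => Real.cosh (ω * t')) (ω * s) t := by
    have := (Real.hasDerivAt_cosh (ω * t)).comp t ((hasDerivAt_id t).const_mul ω)
    simpa [hs_def, mul_comm, Function.comp_def] using this
  have hden : HasDerivAt (fun t' => 4 * Real.sinh (ω * t')) (4 * (ω * c)) t := h1.const_mul 4
  have hdiv : HasDerivAt (fun t' => ω / (4 * Real.sinh (ω * t')))
      ((0 * (4 * s) - ω * (4 * (ω * c))) / (4 * s)^2) t := by
    have := (hasDerivAt_const t ω).div hden (mul_ne_zero four_ne_zero hs0)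
    simpa [hs_def, Pi.div_def] using this
  have hbr : HasDerivAt (fun t' => Real.cosh (ω * t') * (S + Y) - 2 * P)
      (ω * s * (S + Y)) t := (hcosh.mul_const (S + Y)).sub_const (2 * P)
  have hEderiv : HasDerivAt (fun t' => -(ω / (4 * Real.sinh (ω * t'))) *
        (Real.cosh (ω * t') * (S + Y) - 2 * P))
      (-((0 * (4 * s) - ω * (4 * (ω * c))) / (4 * s)^2) * (c * (S + Y) - 2 * P)
        + -(ω / (4 * s)) * (ω * s * (S + Y))) t := by
    have := hdiv.neg.mul hbr
    simpa [hs_def, hc_def, Pi.mul_def, Pi.neg_def] using this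
  have hD : HasDerivAt (fun t' => u t' x)
      ((p * (4 * π * s / ω) ^ (p - 1) * (4 * π * (ω * c) / ω)) * Real.exp E
        + A * (Real.exp E *
          (-((0 * (4 * s) - ω * (4 * (ω * c))) / (4 * s)^2) * (c * (S + Y) - 2 * P)
            + -(ω / (4 * s)) * (ω * s * (S + Y))))) t := by
    have hfe : (fun t' => u t' x) = fun t' =>
        (4 * π * Real.sinh (ω * t') / ω) ^ p *
          Real.exp (-(ω / (4 * Real.sinh (ω * t'))) *
            (Real.cosh (ω * t') * (S + Y) - 2 * P)) := by
      funext t'; rw [hu, hp_def, hS_def, hY_def, hP_def]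
    rw [hfe]
    have := h3.mul hEderiv.exp
    simpa [hA_def, hE_def, hs_def, hc_def, Pi.mul_def] using this
  convert hD using 1
  have hrp : (4 * π * s / ω) ^ (p - 1) = A / (4 * π * s / ω) := by
    rw [hA_def, Real.rpow_sub_one (ne_of_gt hfpos)]
  rw [hrp, hp_def, ha_def]
  have hπ : (0:ℝ) < π := Real.pi_pos
  field_simp
  linear_combination (-(4 * ω^2 * A * Y)) * hc2
end

section
/- Let ν ≥ 1, ω ∈ (ℝ ∪ iℝ) ∖ {0}, let δ > 0 be such that |q_ω(s)| ≤ 4 max(|x|,|y|) whenever 0 < |ωt| < δ, s ∈ [0,1], x, y ∈ ℂ^ν, and let T_d > 0 be such that Re(Ω·ξ⊗ξ) ≥ 0 whenever Re t ≥ 0, 0 < |t| < T_d. Let R > 0 and let μ be a complex measure on ℝ^ν with A := ∫_{ℝ^ν} e^{4R|ξ|} d|μ|(ξ) < ∞. Set T_c := min(T_d, δ/|ω|). Then for every n ≥ 1, every t ∈ ℂ with Re t > 0 and |t| < T_c, and every x, y ∈ ℂ^ν with |x| < R and |y| < R: (i) |e^{−Ω·ξ⊗ξ} e^{i q_ω^n(s)·ξ}|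 ≤ e^{4R(|ξ₁| + ⋯ + |ξ_n|)} for all 0 < s₁ < ⋯ < s_n < 1 and ξ ∈ ℝ^{νn}; (ii) the iterated integral v_n(t,x,y) := t^n ∫_{0<s₁<⋯<s_n<1} ∫_{ℝ^{νn}} e^{−Ω·ξ⊗ξ} e^{i q_ω^n(s)·ξ} dμ(ξ_n)⋯dμ(ξ₁) ds₁⋯ds_n converges absolutely and |v_n(t,x,y)| ≤ (|t|A)^n/n!. -/
open Finset MeasureTheory Complex
open scoped ENNReal

noncomputable section

/-- The open simplex `0 < s₁ < ⋯ < s_n < 1`. -/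
def simplex01 (n : ℕ) : Set (Fin n → ℝ) :=
  {s | StrictMono s ∧ ∀ j, s j ∈ Set.Ioo (0 : ℝ) 1}

/-- Euclidean norm on `ℝ^ν`. -/
def eNorm {ν : ℕ} (ξ : Fin ν → ℝ) : ℝ := Real.sqrt (∑ i, ξ i ^ 2)

/-- Hermitian norm on `ℂ^ν`. -/
def hNorm {ν : ℕ} (x : Fin ν → ℂ) : ℝ := Real.sqrt (∑ i, ‖x i‖ ^ 2)

/-- The quadratic form `Ω·ξ⊗ξ`. -/
def OmegaForm (ν n : ℕ) (ω t : ℂ) (s : Fin n → ℝ) (ξ : Fin n → Fin ν → ℝ) : ℂ :=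
  ∑ j, ∑ k,
    Complex.sinh (ω * t * (s (min j k) : ℂ)) * Complex.sinh (ω * t * (1 - (s (max j k) : ℂ)))
      / (ω * Complex.sinh (ω * t)) * ((∑ i, ξ j i * ξ k i : ℝ) : ℂ)

/-- The path `q_ω(s) = (sh(ωts) x + sh(ωt(1−s)) y)/sh(ωt)`. -/
def qPath (ν : ℕ) (ω t : ℂ) (x y : Fin ν → ℂ) (s : ℝ) : Fin ν → ℂ := fun i =>
  Complex.sinh (ω * t * (s : ℂ)) / Complex.sinh (ω * t) * x i
    + Complex.sinh (ω * t * (1 - (s : ℂ))) / Complex.sinh (ω * t) * y i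

/-- `q_ω^n(s)·ξ = q_ω(s₁)·ξ₁ + ⋯ + q_ω(s_n)·ξ_n` (bilinear dot product). -/
def qDotn (ν n : ℕ) (ω t : ℂ) (x y : Fin ν → ℂ) (s : Fin n → ℝ) (ξ : Fin n → Fin ν → ℝ) : ℂ :=
  ∑ j, ∑ i, qPath ν ω t x y (s j) i * (ξ j i : ℂ)

/-- The integrand `e^{−Ω·ξ⊗ξ} e^{i q_ω^n(s)·ξ}` times the density `∏_j h(ξ_j)` of the
complex measure `dμ = h d|μ|`. -/
def integrand10 (ν n : ℕ) (ω t : ℂ) (x y : Fin ν → ℂ) (h : (Fin ν → ℝ) → ℂ)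
    (p : (Fin n → ℝ) × (Fin n → Fin ν → ℝ)) : ℂ :=
  Complex.exp (-(OmegaForm ν n ω t p.1 p.2)) * Complex.exp (Complex.I * qDotn ν n ω t x y p.1 p.2)
    * ∏ j, h (p.2 j)

theorem piProd {E : Type*} [MeasurableSpace E] (μ : Measure E) [SigmaFinite μ]
    {f : E → ℝ} (hf : Integrable f μ) (n : ℕ) :
    Integrable (fun x : Fin n → E => ∏ j, f (x j)) (Measure.pi fun _ => μ) ∧
    ∫ x : Fin n → E, ∏ j, f (x j) ∂(Measure.pi fun _ => μ) = (∫ z, f z ∂μ) ^ n := by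
  induction n with
  | zero =>
    simp [integrable_const_iff, Measure.pi_empty_univ]
    exact ⟨⟨by simp [Measure.pi_empty_univ]⟩, by simp [Measure.real, Measure.pi_empty_univ]⟩
  | succ n ih =>
    have hmp := (measurePreserving_piFinSuccAbove (fun _ : Fin (n+1) => μ) 0).symm
    have h1 : Integrable (fun p : E × (Fin n → E) => f p.1 * ∏ j, f (p.2 j))
        (μ.prod (Measure.pi fun _ => μ)) := hf.mul_prod ih.1
    constructor
    · rw [← hmp.integrable_comp_emb (MeasurableEquiv.measurableEmbedding _)]
      simp_rw [MeasurableEquiv.piFinSuccAbove_symm_apply, Fin.insertNthEquiv,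
        Fin.prod_univ_succ, Fin.insertNth_zero]
      simpa only [Fin.zero_succAbove, Function.comp_def, Fin.cons_zero, Fin.cons_succ, Equiv.coe_fn_mk, cast_eq] using h1
    · rw [← hmp.integral_comp']
      simp_rw [MeasurableEquiv.piFinSuccAbove_symm_apply, Fin.insertNthEquiv,
        Fin.prod_univ_succ, Fin.insertNth_zero]
      simp only [Fin.zero_succAbove, Fin.cons_zero, Fin.cons_succ, Equiv.coe_fn_mk, cast_eq]
      rw [integral_prod_mul f (fun x : Fin n → E => ∏ j, f (x j)), ih.2, pow_succ']

lemma simplex01_meas (n : ℕ) : MeasurableSet (simplex01 n) := by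
  have h1 : MeasurableSet {s : Fin n → ℝ | StrictMono s} := by
    have : {s : Fin n → ℝ | StrictMono s} = ⋂ i, ⋂ j, {s | i < j → s i < s j} := by
      ext s; simp only [Set.mem_iInter, Set.mem_setOf_eq]
      exact ⟨fun h i j => fun hij => h hij, fun h a b hab => h a b hab⟩
    rw [this]
    refine MeasurableSet.iInter fun i => MeasurableSet.iInter fun j => ?_
    by_cases hij : i < j
    · simp only [hij, true_implies]
      exact measurableSet_lt (measurable_pi_apply i) (measurable_pi_apply j)
    · simp only [hij, false_implies]; exact MeasurableSet.univ
  have h2 : MeasurableSet {s : Fin n → ℝ | ∀ j, s j ∈ Set.Ioo (0:ℝ) 1} := by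
    have : {s : Fin n → ℝ | ∀ j, s j ∈ Set.Ioo (0:ℝ) 1}
        = ⋂ j, (fun s : Fin n → ℝ => s j) ⁻¹' Set.Ioo 0 1 := by ext s; simp
    rw [this]
    exact MeasurableSet.iInter fun j => (measurable_pi_apply j) measurableSet_Ioo
  exact h1.inter h2

lemma simplex01_vol (n : ℕ) : volume (simplex01 n) ≤ 1 / (n.factorial : ℝ≥0∞) := by
  classical
  set S : Equiv.Perm (Fin n) → Set (Fin n → ℝ) := fun σ =>
    {s | StrictMono (s ∘ σ) ∧ ∀ j, s j ∈ Set.Ioo (0:ℝ) 1} with hS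
  have hpre : ∀ σ : Equiv.Perm (Fin n),
      S σ = (fun s : Fin n → ℝ => s ∘ σ) ⁻¹' simplex01 n := by
    intro σ
    ext s
    simp only [Set.mem_preimage, simplex01, Set.mem_setOf_eq, hS, Function.comp_apply]
    constructor
    · rintro ⟨h1, h2⟩; exact ⟨h1, fun j => h2 (σ j)⟩
    · rintro ⟨h1, h2⟩
      refine ⟨h1, fun j => ?_⟩
      have := h2 (σ.symm j); simpa using this
  have key : ∀ σ : Equiv.Perm (Fin n), volume (S σ) = volume (simplex01 n) := by
    intro σ
    have hmp := measurePreserving_piCongrLeft (fun _ : Fin n => (volume : Measure ℝ)) σ.symm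
    have hcoe : ⇑(MeasurableEquiv.piCongrLeft (fun _ : Fin n => ℝ) σ.symm)
        = fun s : Fin n → ℝ => s ∘ σ := by
      funext s; ext b
      simp [MeasurableEquiv.coe_piCongrLeft, Equiv.piCongrLeft_apply]
    rw [hpre σ, ← hcoe]
    have hv : (Measure.pi fun _ : Fin n => (volume : Measure ℝ)) = (volume : Measure (Fin n → ℝ)) := by
      rw [volume_pi]
    rw [← hv]
    exact hmp.measure_preimage (by rw [hv]; exact (simplex01_meas n).nullMeasurableSet)
  have hdisj : Pairwise (Function.onFun Disjoint S) := by
    intro σ τ hne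
    rw [Function.onFun, Set.disjoint_left]
    rintro s ⟨h1, h2⟩ ⟨h3, _⟩
    apply hne
    have hr : Set.range (s ∘ σ) = Set.range (s ∘ τ) := by
      rw [Set.range_comp, Set.range_comp, σ.range_eq_univ, τ.range_eq_univ]
    haveI : WellFoundedLT (Fin n) := Finite.to_wellFoundedLT
    have heq : s ∘ σ = s ∘ τ := (StrictMono.range_inj (β := Fin n) (γ := ℝ) h1 h3).mp hr
    have hinj : Function.Injective s := by
      have hc := h1.injective.comp σ.symm.injective
      have he : (s ∘ σ) ∘ σ.symm = s := by funext z; simp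
      rwa [he] at hc
    ext j
    exact congrArg Fin.val (hinj (congrFun heq j))
  have hmeasS : ∀ σ, MeasurableSet (S σ) := by
    intro σ
    rw [hpre σ]
    exact (simplex01_meas n).preimage (measurable_pi_lambda _ fun b => measurable_pi_apply (σ b))
  have hsub : (⋃ σ, S σ) ⊆ Set.pi Set.univ (fun _ : Fin n => Set.Ioo (0:ℝ) 1) := by
    rintro s hs
    obtain ⟨σ, h1, h2⟩ := Set.mem_iUnion.mp hs
    intro j _; exact h2 j
  have hsum : (n.factorial : ℝ≥0∞) * volume (simplex01 n) ≤ 1 := by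
    calc (n.factorial : ℝ≥0∞) * volume (simplex01 n)
        = ∑ σ : Equiv.Perm (Fin n), volume (S σ) := by
          simp only [key, Finset.sum_const, nsmul_eq_mul]
          rw [Finset.card_univ, Fintype.card_perm, Fintype.card_fin]
      _ = volume (⋃ σ, S σ) := by
          rw [measure_iUnion hdisj hmeasS, tsum_fintype]
      _ ≤ volume (Set.pi Set.univ (fun _ : Fin n => Set.Ioo (0:ℝ) 1)) := measure_mono hsub
      _ = 1 := by rw [volume_pi_pi]; simp
  rw [ENNReal.le_div_iff_mul_le
    (Or.inl (by exact_mod_cast (Nat.factorial_pos n).ne'))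
    (Or.inl (ENNReal.natCast_ne_top _))]
  rw [mul_comm]; exact hsum

/-- Under the stated bounds on the path `q_ω` (constant `δ`) and on the
real part of the deformation form `Ω` (constant `T_d`), for a complex measure
`dμ = h d|μ|` (with `|h| = 1` and `|μ| = μP` finite) with `A = ∫ e^{4R|ξ|} d|μ| < ∞`,
for every `n ≥ 1`, `t` with `Re t > 0`, `|t| < T_c = min(T_d, δ/|ω|)`, and `|x|, |y| < R`:
(i) the integrand is bounded by `e^{4R(|ξ₁|+⋯+|ξ_n|)}`; (ii) the iterated integral
defining `v_n` converges absolutely and `|v_n(t,x,y)| ≤ (|t|A)^n/n!`. -/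
theorem stmt10 (ν : ℕ) (hν : 1 ≤ ν) (ω : ℂ) (hω : ω.im = 0 ∨ ω.re = 0) (hω0 : ω ≠ 0)
    (δ : ℝ) (hδpos : 0 < δ)
    (hδ : ∀ (t : ℂ) (s : ℝ) (x y : Fin ν → ℂ), 0 < ‖ω * t‖ → ‖ω * t‖ < δ →
      s ∈ Set.Icc (0 : ℝ) 1 → hNorm (qPath ν ω t x y s) ≤ 4 * max (hNorm x) (hNorm y))
    (Td : ℝ) (hTdpos : 0 < Td)
    (hTd : ∀ n : ℕ, 1 ≤ n → ∀ s ∈ simplex01 n, ∀ (ξ : Fin n → Fin ν → ℝ) (t : ℂ),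
      0 < ‖t‖ → ‖t‖ < Td → 0 ≤ t.re → 0 ≤ (OmegaForm ν n ω t s ξ).re)
    (R : ℝ) (hR : 0 < R)
    (μP : Measure (Fin ν → ℝ)) [IsFiniteMeasure μP]
    (h : (Fin ν → ℝ) → ℂ) (hmeas : Measurable h) (hone : ∀ ξ, ‖h ξ‖ = 1)
    (hint : Integrable (fun ξ => Real.exp (4 * R * eNorm ξ)) μP)
    (A : ℝ) (hA : A = ∫ ξ, Real.exp (4 * R * eNorm ξ) ∂μP)
    (n : ℕ) (hn : 1 ≤ n) (t : ℂ) (ht : 0 < t.re) (htT : ‖t‖ < min Td (δ / ‖ω‖))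
    (x y : Fin ν → ℂ) (hx : hNorm x < R) (hy : hNorm y < R) :
    (∀ s ∈ simplex01 n, ∀ ξ : Fin n → Fin ν → ℝ,
      ‖Complex.exp (-(OmegaForm ν n ω t s ξ)) * Complex.exp (Complex.I * qDotn ν n ω t x y s ξ)‖
        ≤ Real.exp (4 * R * ∑ j, eNorm (ξ j))) ∧
    Integrable (integrand10 ν n ω t x y h)
      (((volume : Measure (Fin n → ℝ)).restrict (simplex01 n)).prod
        (Measure.pi fun _ : Fin n => μP)) ∧
    ‖t ^ n * ∫ p, integrand10 ν n ω t x y h p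
        ∂(((volume : Measure (Fin n → ℝ)).restrict (simplex01 n)).prod
          (Measure.pi fun _ : Fin n => μP))‖
      ≤ (‖t‖ * A) ^ n / n.factorial := by
  classical
  obtain ⟨htTd, htδ⟩ := lt_min_iff.mp htT
  have ht0 : t ≠ 0 := by
    intro hcon; rw [hcon] at ht; simp at ht
  have htnorm : 0 < ‖t‖ := norm_pos_iff.mpr ht0
  have hωpos : 0 < ‖ω‖ := norm_pos_iff.mpr hω0
  have hωt : 0 < ‖ω * t‖ := by rw [norm_mul]; positivity
  have hωtδ : ‖ω * t‖ < δ := by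
    rw [norm_mul]
    calc ‖ω‖ * ‖t‖ < ‖ω‖ * (δ / ‖ω‖) := mul_lt_mul_of_pos_left htδ hωpos
      _ = δ := by rw [mul_comm]; exact div_mul_cancel₀ δ hωpos.ne'
  -- Part (i)
  have part1 : ∀ s ∈ simplex01 n, ∀ ξ : Fin n → Fin ν → ℝ,
      ‖Complex.exp (-(OmegaForm ν n ω t s ξ)) * Complex.exp (Complex.I * qDotn ν n ω t x y s ξ)‖
        ≤ Real.exp (4 * R * ∑ j, eNorm (ξ j)) := by
    intro s hs ξ
    rw [norm_mul, Complex.norm_exp, Complex.norm_exp,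
      ← Real.exp_add]
    apply Real.exp_le_exp.mpr
    have hΩ : 0 ≤ (OmegaForm ν n ω t s ξ).re := hTd n hn s hs ξ t htnorm htTd ht.le
    have hq : ‖qDotn ν n ω t x y s ξ‖ ≤ 4 * R * ∑ j, eNorm (ξ j) := by
      unfold qDotn
      calc ‖∑ j, ∑ i, qPath ν ω t x y (s j) i * ((ξ j i : ℝ) : ℂ)‖
          ≤ ∑ j, ‖∑ i, qPath ν ω t x y (s j) i * ((ξ j i : ℝ) : ℂ)‖ :=
            norm_sum_le _ _
        _ ≤ ∑ j, 4 * R * eNorm (ξ j) := by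
            apply Finset.sum_le_sum
            intro j _
            have hCS : ‖∑ i, qPath ν ω t x y (s j) i * ((ξ j i : ℝ) : ℂ)‖
                ≤ hNorm (qPath ν ω t x y (s j)) * eNorm (ξ j) := by
              have e1 : (∑ i, ‖qPath ν ω t x y (s j) i‖ ^ 2)
                  = ∑ i, ‖qPath ν ω t x y (s j) i‖ ^ 2 := by
                rfl
              have e2 : (∑ i, |ξ j i| ^ 2) = ∑ i, (ξ j i) ^ 2 := by
                simp [sq_abs]
              calc ‖∑ i, qPath ν ω t x y (s j) i * ((ξ j i : ℝ) : ℂ)‖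
                  ≤ ∑ i, ‖qPath ν ω t x y (s j) i‖ * |ξ j i| := by
                    refine (norm_sum_le _ _).trans ?_
                    apply Finset.sum_le_sum; intro i _
                    rw [norm_mul, Complex.norm_real, Real.norm_eq_abs]
                _ ≤ Real.sqrt (∑ i, ‖qPath ν ω t x y (s j) i‖ ^ 2)
                    * Real.sqrt (∑ i, |ξ j i| ^ 2) :=
                    Real.sum_mul_le_sqrt_mul_sqrt _ _ _
                _ = hNorm (qPath ν ω t x y (s j)) * eNorm (ξ j) := by
                    unfold hNorm eNorm
                    rw [e1, e2]
            have hqb : hNorm (qPath ν ω t x y (s j)) ≤ 4 * R := by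
              have hmem : s j ∈ Set.Icc (0:ℝ) 1 := Set.mem_Icc_of_Ioo (hs.2 j)
              refine (hδ t (s j) x y hωt hωtδ hmem).trans ?_
              have : max (hNorm x) (hNorm y) ≤ R := (max_lt hx hy).le
              linarith
            exact hCS.trans (mul_le_mul_of_nonneg_right hqb (Real.sqrt_nonneg _))
        _ = 4 * R * ∑ j, eNorm (ξ j) := by rw [Finset.mul_sum]
    have him : (Complex.I * qDotn ν n ω t x y s ξ).re ≤ 4 * R * ∑ j, eNorm (ξ j) := by
      rw [Complex.mul_re, Complex.I_re, Complex.I_im]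
      have h1 : -(qDotn ν n ω t x y s ξ).im ≤ ‖qDotn ν n ω t x y s ξ‖ :=
        (neg_le_abs _).trans (Complex.abs_im_le_norm _)
      have := h1.trans hq
      linarith
    have hneg : (-(OmegaForm ν n ω t s ξ)).re ≤ 0 := by
      rw [Complex.neg_re]; linarith
    linarith
  refine ⟨part1, ?_⟩
  -- Setup for integrability
  set ρ := (((volume : Measure (Fin n → ℝ)).restrict (simplex01 n)).prod
      (Measure.pi fun _ : Fin n => μP)) with hρ
  have hvol_le : volume (simplex01 n) ≤ 1 / (n.factorial : ℝ≥0∞) := simplex01_vol n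
  have hvol_lt : volume (simplex01 n) < ⊤ :=
    lt_of_le_of_lt hvol_le (ENNReal.div_lt_top ENNReal.one_ne_top
      (by exact_mod_cast (Nat.factorial_pos n).ne'))
  haveI hfin : IsFiniteMeasure ((volume : Measure (Fin n → ℝ)).restrict (simplex01 n)) := by
    constructor
    rw [Measure.restrict_apply_univ]
    exact hvol_lt
  have hG := piProd μP hint n
  set G : (Fin n → Fin ν → ℝ) → ℝ := fun ξ => ∏ j, Real.exp (4 * R * eNorm (ξ j)) with hGdef
  have hg : Integrable (fun p : (Fin n → ℝ) × (Fin n → Fin ν → ℝ) => (1:ℝ) * G p.2) ρ :=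
    (integrable_const (1:ℝ)).mul_prod hG.1
  have hg' : Integrable (fun p : (Fin n → ℝ) × (Fin n → Fin ν → ℝ) => G p.2) ρ := by
    simpa using hg
  -- measurability
  have hmeas1 : Measurable (integrand10 ν n ω t x y h) := by
    unfold integrand10
    apply Measurable.mul
    · apply Measurable.mul
      · apply Complex.measurable_exp.comp
        apply Measurable.neg
        unfold OmegaForm
        fun_prop
      · apply Complex.measurable_exp.comp
        apply Measurable.const_mul
        unfold qDotn qPath
        fun_prop
    · exact Finset.measurable_prod _ fun j _ =>
        hmeas.comp ((measurable_pi_apply j).comp measurable_snd)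
  -- a.e. membership of the first coordinate in the simplex
  have haep : ∀ᵐ p ∂ρ, p.1 ∈ simplex01 n := by
    rw [ae_iff]
    have hset : {p : (Fin n → ℝ) × (Fin n → Fin ν → ℝ) | ¬ p.1 ∈ simplex01 n}
        = (simplex01 n)ᶜ ×ˢ (Set.univ : Set (Fin n → Fin ν → ℝ)) := by
      ext p; simp [Set.mem_prod]
    rw [hρ, hset, Measure.prod_prod, Measure.restrict_apply (simplex01_meas n).compl]
    simp
  have hbound : ∀ᵐ p ∂ρ, ‖integrand10 ν n ω t x y h p‖ ≤ G p.2 := by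
    filter_upwards [haep] with p hp
    unfold integrand10
    rw [norm_mul]
    have h2 : ‖∏ j, h (p.2 j)‖ = 1 := by
      rw [norm_prod]
      simp [hone]
    rw [h2, mul_one]
    refine (part1 p.1 hp p.2).trans_eq ?_
    rw [hGdef]
    simp only
    rw [← Real.exp_sum]
    congr 1
    rw [Finset.mul_sum]
  have hInt : Integrable (integrand10 ν n ω t x y h) ρ :=
    Integrable.mono' hg' hmeas1.aestronglyMeasurable hbound
  refine ⟨hInt, ?_⟩
  -- final bound
  have hA0 : 0 ≤ A := by
    rw [hA]; exact integral_nonneg fun ξ => (Real.exp_pos _).le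
  have hvolR : (volume (simplex01 n)).toReal ≤ 1 / (n.factorial : ℝ) := by
    have := ENNReal.toReal_mono (by
      exact (ENNReal.div_lt_top ENNReal.one_ne_top
        (by exact_mod_cast (Nat.factorial_pos n).ne')).ne) hvol_le
    rwa [ENNReal.toReal_div, ENNReal.toReal_one, ENNReal.toReal_natCast] at this
  have hint_eq : ∫ p, G p.2 ∂ρ = (volume (simplex01 n)).toReal * A ^ n := by
    have : (fun p : (Fin n → ℝ) × (Fin n → Fin ν → ℝ) => G p.2)
        = fun p => (fun _ : Fin n → ℝ => (1:ℝ)) p.1 * G p.2 := by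
      funext p; simp
    rw [this, hρ, integral_prod_mul (fun _ : Fin n → ℝ => (1:ℝ)) G, integral_const, hG.2, ← hA]
    rw [measureReal_restrict_apply_univ]
    simp [smul_eq_mul, Measure.real]
  calc ‖t ^ n * ∫ p, integrand10 ν n ω t x y h p ∂ρ‖
      = ‖t‖ ^ n * ‖∫ p, integrand10 ν n ω t x y h p ∂ρ‖ := by rw [norm_mul, norm_pow]
    _ ≤ ‖t‖ ^ n * ∫ p, ‖integrand10 ν n ω t x y h p‖ ∂ρ :=
        mul_le_mul_of_nonneg_left (norm_integral_le_integral_norm _)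
          (pow_nonneg (norm_nonneg t) n)
    _ ≤ ‖t‖ ^ n * ∫ p, G p.2 ∂ρ := by
        apply mul_le_mul_of_nonneg_left _ (pow_nonneg (norm_nonneg t) n)
        exact integral_mono_ae hInt.norm hg' hbound
    _ = ‖t‖ ^ n * ((volume (simplex01 n)).toReal * A ^ n) := by rw [hint_eq]
    _ ≤ ‖t‖ ^ n * ((1 / (n.factorial : ℝ)) * A ^ n) := by
        apply mul_le_mul_of_nonneg_left _ (pow_nonneg (norm_nonneg t) n)
        exact mul_le_mul_of_nonneg_right hvolR (pow_nonneg hA0 n)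
    _ = (‖t‖ * A) ^ n / n.factorial := by
        rw [mul_pow]; ring
  done

end
end

section
/- For every z ∈ ℂ, |J(z)| ≤ exp(2 |Im(z^{1/2})|), where J(z) := Σ_{n≥0} (−1)^n z^n/(n!)². -/
open Complex MeasureTheory Finset
open scoped Real


noncomputable def Gfun (w : ℂ) (n : ℕ) (θ : ℝ) : ℂ :=
  ∑ p ∈ Finset.HasAntidiagonal.antidiagonal n,
    (I * w * Complex.exp (I * θ)) ^ p.1 / p.1.factorial *
      ((I * w * Complex.exp (-(I * θ))) ^ p.2 / p.2.factorial)

lemma summable_norm_exp_term (A : ℂ) :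
    Summable fun n : ℕ => ‖A ^ n / (n.factorial : ℂ)‖ := by
  have := Real.summable_pow_div_factorial ‖A‖
  apply this.congr
  intro n
  simp [norm_div, norm_pow]

lemma exp_eq_tsum' (A : ℂ) : Complex.exp A = ∑' n : ℕ, A ^ n / n.factorial := by
  rw [Complex.exp_eq_exp_ℂ, NormedSpace.exp_eq_tsum_div]

lemma tsum_Gfun (w : ℂ) (θ : ℝ) :
    ∑' n, Gfun w n θ
      = Complex.exp (I * w * Complex.exp (I * θ) + I * w * Complex.exp (-(I * θ))) := by
  rw [Complex.exp_add, exp_eq_tsum' (I * w * Complex.exp (I * θ)),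
    exp_eq_tsum' (I * w * Complex.exp (-(I * θ))),
    tsum_mul_tsum_eq_tsum_sum_antidiagonal_of_summable_norm
      (summable_norm_exp_term _) (summable_norm_exp_term _)]
  rfl

lemma sum_antidiagonal_inv_factorial (a : ℝ) (n : ℕ) :
    ∑ p ∈ Finset.HasAntidiagonal.antidiagonal n, a ^ p.1 / p.1.factorial * (a ^ p.2 / p.2.factorial)
      = (2 * a) ^ n / n.factorial := by
  rw [Finset.Nat.sum_antidiagonal_eq_sum_range_succ_mk]
  have key : ∀ k ∈ Finset.range (n + 1),
      a ^ k / k.factorial * (a ^ (n - k) / (n - k).factorial)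
        = (n.choose k : ℝ) * a ^ n / n.factorial := by
    intro k hk
    rw [Finset.mem_range] at hk
    have hk' : k ≤ n := by omega
    have hc : ((n.choose k * k.factorial * (n - k).factorial : ℕ) : ℝ)
        = (n.factorial : ℝ) := by
      exact_mod_cast congrArg Nat.cast (Nat.choose_mul_factorial_mul_factorial hk')
    push_cast at hc
    have h1 : (k.factorial : ℝ) ≠ 0 := Nat.cast_ne_zero.mpr k.factorial_ne_zero
    have h2 : ((n - k).factorial : ℝ) ≠ 0 := Nat.cast_ne_zero.mpr (n - k).factorial_ne_zero
    have h3 : (n.factorial : ℝ) ≠ 0 := Nat.cast_ne_zero.mpr n.factorial_ne_zero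
    field_simp
    rw [← pow_add, Nat.add_sub_cancel' hk']
    linear_combination - a ^ n * hc
  rw [Finset.sum_congr rfl key, ← Finset.sum_div, ← Finset.sum_mul, ← Nat.cast_sum,
    Nat.sum_range_choose, mul_pow]
  push_cast
  ring


lemma norm_Gfun_le (w : ℂ) (n : ℕ) (θ : ℝ) :
    ‖Gfun w n θ‖ ≤ (2 * ‖w‖) ^ n / n.factorial := by
  refine (norm_sum_le _ _).trans ?_
  rw [← sum_antidiagonal_inv_factorial ‖w‖ n]
  apply Finset.sum_le_sum
  intro p _
  have e1 : ‖I * w * Complex.exp (I * θ)‖ = ‖w‖ := by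
    have : ‖Complex.exp (I * θ)‖ = 1 := by
      rw [mul_comm]; exact Complex.norm_exp_ofReal_mul_I θ
    simp [this]
  have e2 : ‖I * w * Complex.exp (-(I * θ))‖ = ‖w‖ := by
    have : ‖Complex.exp (-(I * θ))‖ = 1 := by
      rw [show -(I * (θ : ℂ)) = ((-θ : ℝ) : ℂ) * I by push_cast; ring]
      exact Complex.norm_exp_ofReal_mul_I (-θ)
    simp [this]
  calc ‖_ * _‖ = ‖w‖ ^ p.1 / p.1.factorial * (‖w‖ ^ p.2 / p.2.factorial) := by
        rw [norm_mul, norm_div, norm_div, norm_pow, norm_pow, e1, e2]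
        simp
    _ ≤ _ := le_refl _


lemma integral_exp_int (k : ℤ) :
    ∫ θ in (0:ℝ)..(2*π), Complex.exp ((k : ℂ) * I * θ) = if k = 0 then 2*π else 0 := by
  rcases eq_or_ne k 0 with hk | hk
  · subst hk
    simp [Complex.ofReal_mul]
  · rw [if_neg hk]
    have hc : (k : ℂ) * I ≠ 0 := by
      simp [Complex.I_ne_zero, Int.cast_eq_zero, hk]
    rw [integral_exp_mul_complex hc]
    have h1 : (k : ℂ) * I * ((2*π : ℝ) : ℂ) = (k : ℤ) * (2 * π * I) := by
      push_cast; ring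
    rw [h1, Complex.exp_int_mul_two_pi_mul_I]
    simp

lemma Gfun_eq (w : ℂ) (n : ℕ) (θ : ℝ) :
    Gfun w n θ = ∑ p ∈ Finset.HasAntidiagonal.antidiagonal n,
      (I * w) ^ n / (p.1.factorial * p.2.factorial) *
        Complex.exp ((((p.1 : ℤ) - (p.2 : ℤ) : ℤ) : ℂ) * I * θ) := by
  apply Finset.sum_congr rfl
  intro p hp
  have hpn : p.1 + p.2 = n := Finset.HasAntidiagonal.mem_antidiagonal.mp hp
  have hE : Complex.exp (I * θ) ^ p.1 * Complex.exp (-(I * θ)) ^ p.2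
      = Complex.exp ((((p.1 : ℤ) - (p.2 : ℤ) : ℤ) : ℂ) * I * θ) := by
    rw [← Complex.exp_nat_mul, ← Complex.exp_nat_mul, ← Complex.exp_add]
    congr 1
    push_cast
    ring
  have hmul : (I * w) ^ p.1 * Complex.exp (I * θ) ^ p.1 *
      ((I * w) ^ p.2 * Complex.exp (-(I * θ)) ^ p.2)
      = (I * w) ^ n * Complex.exp ((((p.1 : ℤ) - (p.2 : ℤ) : ℤ) : ℂ) * I * θ) := by
    rw [mul_mul_mul_comm, ← pow_add, hpn, hE]
  rw [mul_pow (I*w), mul_pow (I*w), div_mul_div_comm, hmul]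
  ring

lemma integral_Gfun (w : ℂ) (n : ℕ) :
    ∫ θ in (0:ℝ)..(2*π), Gfun w n θ
      = ∑ p ∈ Finset.HasAntidiagonal.antidiagonal n,
          if p.1 = p.2 then (I * w) ^ n / (p.1.factorial * p.2.factorial) * (2*π) else 0 := by
  simp_rw [Gfun_eq]
  rw [intervalIntegral.integral_finset_sum]
  · apply Finset.sum_congr rfl
    intro p _
    rw [intervalIntegral.integral_const_mul, integral_exp_int]
    rcases eq_or_ne p.1 p.2 with h | h
    · rw [if_pos h, if_pos (by omega), Complex.ofReal_mul]
      norm_num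
    · rw [if_neg h, if_neg (by omega)]; simp
  · intro p _
    apply Continuous.intervalIntegrable
    fun_prop

lemma integral_Gfun_odd (w : ℂ) (m : ℕ) :
    ∫ θ in (0:ℝ)..(2*π), Gfun w (2*m+1) θ = 0 := by
  rw [integral_Gfun]
  apply Finset.sum_eq_zero
  intro p hp
  have hpn : p.1 + p.2 = 2*m+1 := Finset.HasAntidiagonal.mem_antidiagonal.mp hp
  rw [if_neg (by omega)]

lemma integral_Gfun_even (w : ℂ) (m : ℕ) :
    ∫ θ in (0:ℝ)..(2*π), Gfun w (2*m) θ
      = (I * w) ^ (2*m) / (m.factorial : ℂ) ^ 2 * (2*π) := by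
  rw [integral_Gfun]
  rw [Finset.sum_eq_single_of_mem (m, m)
    (Finset.HasAntidiagonal.mem_antidiagonal.mpr (by omega))]
  · rw [if_pos rfl, sq]
  · intro p hp hne
    have hpn : p.1 + p.2 = 2*m := Finset.HasAntidiagonal.mem_antidiagonal.mp hp
    have : ¬ p.1 = p.2 := by
      intro h
      apply hne
      have : p.1 = m := by omega
      have h2 : p.2 = m := by omega
      exact Prod.ext this h2
    rw [if_neg this]


lemma continuous_Gfun (w : ℂ) (n : ℕ) : Continuous (Gfun w n) := by
  apply continuous_finset_sum
  intro p _
  fun_prop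

lemma interchange (w : ℂ) :
    ∫ θ in (0:ℝ)..(2*π), Complex.exp (I * w * Complex.exp (I * θ)
        + I * w * Complex.exp (-(I * θ)))
      = ∑' n : ℕ, ∫ θ in (0:ℝ)..(2*π), Gfun w n θ := by
  have h2π : (0:ℝ) ≤ 2*π := by positivity
  have hInt : ∀ n : ℕ, Integrable (Gfun w n) (volume.restrict (Set.Ioc 0 (2*π))) :=
    fun n => (continuous_Gfun w n).integrableOn_Ioc
  have hSum : Summable fun n : ℕ => ∫ θ in Set.Ioc (0:ℝ) (2*π), ‖Gfun w n θ‖ := by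
    apply Summable.of_nonneg_of_le
      (fun n => integral_nonneg fun θ => norm_nonneg _)
      (fun n => ?_)
      (((Real.summable_pow_div_factorial (2*‖w‖)).mul_left (2*π)))
    calc ∫ θ in Set.Ioc (0:ℝ) (2*π), ‖Gfun w n θ‖
        ≤ ‖∫ θ in Set.Ioc (0:ℝ) (2*π), ‖Gfun w n θ‖‖ := le_abs_self _
      _ ≤ ((2*‖w‖)^n / n.factorial) * (volume (Set.Ioc (0:ℝ) (2*π))).toReal := by
          apply norm_setIntegral_le_of_norm_le_const
          · rw [Real.volume_Ioc]; exact ENNReal.ofReal_lt_top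
          · intro θ _
            rw [Real.norm_eq_abs, _root_.abs_of_nonneg (norm_nonneg _)]
            exact norm_Gfun_le w n θ
      _ = 2*π * ((2*‖w‖)^n / n.factorial) := by
          rw [Real.volume_Ioc, sub_zero, ENNReal.toReal_ofReal h2π]
          ring
  simp_rw [← tsum_Gfun w]
  rw [intervalIntegral.integral_of_le h2π]
  rw [← integral_tsum_of_summable_integral_norm hInt hSum]
  apply tsum_congr
  intro n
  rw [intervalIntegral.integral_of_le h2π]

lemma key (w : ℂ) :
    ∑' n : ℕ, (-1)^n * (w^2)^n / ((n.factorial : ℂ))^2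
      = (1 / ((2*π : ℝ) : ℂ)) * ∫ θ in (0:ℝ)..(2*π),
          Complex.exp (I * w * Complex.exp (I * θ) + I * w * Complex.exp (-(I * θ))) := by
  rw [interchange w]
  have hvanish : ∀ n ∉ Set.range (fun m : ℕ => 2*m),
      (∫ θ in (0:ℝ)..(2*π), Gfun w n θ) = 0 := by
    intro n hn
    have : ¬ Even n := by
      intro ⟨r, hr⟩
      exact hn ⟨r, by dsimp only; omega⟩
    obtain ⟨m, hm⟩ : ∃ m, n = 2*m+1 := by
      rcases Nat.even_or_odd n with h | ⟨m, hm⟩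
      · exact absurd h this
      · exact ⟨m, by omega⟩
    rw [hm]
    exact integral_Gfun_odd w m
  have hinj : Function.Injective (fun m : ℕ => 2*m) := fun a b h => by dsimp only at h; omega
  rw [← Function.Injective.tsum_eq (f := fun n => ∫ θ in (0:ℝ)..(2*π), Gfun w n θ)
    hinj (Function.support_subset_iff'.2 hvanish)]
  have heval : ∀ m : ℕ, (∫ θ in (0:ℝ)..(2*π), Gfun w (2*m) θ)
      = ((2*π : ℝ) : ℂ) * ((-1)^m * (w^2)^m / ((m.factorial : ℂ))^2) := by
    intro m
    rw [integral_Gfun_even w m]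
    have : (I * w) ^ (2*m) = (-1)^m * (w^2)^m := by
      rw [pow_mul, mul_pow, I_sq, neg_one_mul, neg_pow]
    rw [this]
    push_cast
    ring
  simp_rw [heval]
  rw [tsum_mul_left, ← mul_assoc]
  have hπ : ((2*π : ℝ) : ℂ) ≠ 0 := by
    simp [Real.pi_ne_zero]
  rw [one_div, inv_mul_cancel₀ hπ, one_mul]

lemma key_bound (w : ℂ) :
    ‖∑' n : ℕ, (-1)^n * (w^2)^n / ((n.factorial : ℂ))^2‖ ≤ Real.exp (2 * |w.im|) := by
  rw [key w, norm_mul]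
  have hbound : ∀ θ ∈ Set.uIoc (0:ℝ) (2*π),
      ‖Complex.exp (I * w * Complex.exp (I * θ) + I * w * Complex.exp (-(I * θ)))‖
        ≤ Real.exp (2 * |w.im|) := by
    intro θ _
    have harg : I * w * Complex.exp (I * θ) + I * w * Complex.exp (-(I * θ))
        = ((2 * Real.cos θ : ℝ) : ℂ) * (I * w) := by
      have hc : Complex.exp (I * θ) + Complex.exp (-(I * θ)) = ((2 * Real.cos θ : ℝ) : ℂ) := by
        rw [Complex.ofReal_mul, Complex.ofReal_cos, Complex.cos]
        push_cast
        ring_nf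
      rw [← mul_add, hc]
      ring
    rw [harg, Complex.norm_exp]
    apply Real.exp_le_exp.2
    have hre : (((2 * Real.cos θ : ℝ) : ℂ) * (I * w)).re = 2 * Real.cos θ * (-w.im) := by
      simp only [Complex.mul_re, Complex.mul_im, Complex.ofReal_re, Complex.ofReal_im,
        Complex.I_re, Complex.I_im]
      ring
    rw [hre]
    calc 2 * Real.cos θ * (-w.im) ≤ |2 * Real.cos θ * (-w.im)| := le_abs_self _
      _ = 2 * |Real.cos θ| * |w.im| := by rw [abs_mul, abs_mul, abs_neg]; norm_num
      _ ≤ 2 * 1 * |w.im| := by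
          have := Real.abs_cos_le_one θ
          nlinarith [abs_nonneg w.im]
      _ = 2 * |w.im| := by ring
  have h1 : ‖∫ θ in (0:ℝ)..(2*π),
      Complex.exp (I * w * Complex.exp (I * θ) + I * w * Complex.exp (-(I * θ)))‖
        ≤ Real.exp (2 * |w.im|) * |2*π - 0| :=
    intervalIntegral.norm_integral_le_of_norm_le_const fun θ hθ => hbound θ hθ
  have h2π : (0:ℝ) < 2*π := by positivity
  have hn : ‖(1 / ((2*π : ℝ) : ℂ))‖ = 1 / (2*π) := by
    rw [norm_div, norm_one, Complex.norm_real, Real.norm_eq_abs, abs_of_pos h2π]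
  rw [hn]
  rw [sub_zero, abs_of_pos h2π] at h1
  calc 1 / (2*π) * ‖_‖ ≤ 1 / (2*π) * (Real.exp (2 * |w.im|) * (2*π)) := by
        apply mul_le_mul_of_nonneg_left h1 (by positivity)
    _ = Real.exp (2 * |w.im|) := by field_simp


/-- For every `z ∈ ℂ`, `|J(z)| ≤ exp(2 |Im(z^{1/2})|)`, where
`J(z) = ∑_{n≥0} (−1)^n z^n/(n!)²` and `z^{1/2}` is the principal square root. -/
theorem stmt13 (z : ℂ) :
    ‖∑' n : ℕ, (-1) ^ n * z ^ n / ((n.factorial : ℂ)) ^ 2‖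
      ≤ Real.exp (2 * |(z ^ ((1 : ℂ) / 2)).im|) := by
  rcases eq_or_ne z 0 with rfl | hz
  · have h0 : ∑' n : ℕ, (-1:ℂ)^n * (0:ℂ)^n / ((n.factorial:ℂ))^2 = 1 := by
      rw [tsum_eq_single 0 ?_]
      · simp
      · intro n hn
        simp [zero_pow hn]
    rw [h0]
    rw [Complex.zero_cpow (by norm_num : (1:ℂ)/2 ≠ 0)]
    simp
  · have hwsq : (z ^ ((1:ℂ)/2))^2 = z := by
      rw [sq, ← Complex.cpow_add _ _ hz]
      norm_num
    have h := key_bound (z ^ ((1:ℂ)/2))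
    rw [hwsq] at h
    exact h
end
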